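/- arXiv:2005.01482 — 3 statements merged into one kernel-verified Lean document; each statement's English description precedes it below -/
import Mathlib

section
/- Consider the speed observer ξ' = −D ω̂ + P − d·P_e(t) − k ω̂ with output ω̂ = ξ + k δ, applied to the system δ' = ω, ω' = −D ω + P − d·P_e(t), where D, k > 0, P, d are constants and P_e is continuous. Then ω̂(t) − ω(t) → 0 as t → ∞ for all initial conditions. -/
open Filter

/-- Speed observer convergence: for the system `δ' = ω`, `ω' = −Dω + P − d·Pe(t)` and the
observer `ξ' = −D ω̂ + P − d·Pe(t) − k ω̂`, `ω̂ = ξ + kδ` (with `D, k > 0`, `Pe` continuous),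
the estimate converges: `ω̂(t) − ω(t) → 0`. -/
theorem stmt8 (D k P d : ℝ) (hD : 0 < D) (hk : 0 < k)
    (Pe : ℝ → ℝ) (hPe : Continuous Pe)
    (δ ω ξ ωhat : ℝ → ℝ)
    (hωhat : ∀ t, ωhat t = ξ t + k * δ t)
    (hδ : ∀ t, HasDerivAt δ (ω t) t)
    (hω : ∀ t, HasDerivAt ω (-D * ω t + P - d * Pe t) t)
    (hξ : ∀ t, HasDerivAt ξ (-D * ωhat t + P - d * Pe t - k * ωhat t) t) :
    Tendsto (fun t => ωhat t - ω t) atTop (nhds 0) := by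
  set e : ℝ → ℝ := fun t => ωhat t - ω t with he
  have hfun : e = fun u => ξ u + k * δ u - ω u := funext fun u => by simp [he, hωhat u]
  have hede : ∀ t, HasDerivAt e (-(D + k) * e t) t := by
    intro t
    have h0 := ((hξ t).add ((hδ t).const_mul k)).sub (hω t)
    rw [hfun]
    convert h0 using 1
    case e'_9 =>
      simp only [hfun, hωhat t]
      ring
    all_goals rfl
  have key : ∀ t, e t = e 0 * Real.exp (-(D + k) * t) := by
    intro t
    have hg : ∀ s, HasDerivAt (fun u => e u * Real.exp ((D + k) * u)) 0 s := by
      intro s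
      have h1 : HasDerivAt (fun u => Real.exp ((D + k) * u))
          (Real.exp ((D + k) * s) * (D + k)) s := by
        simpa using ((hasDerivAt_id s).const_mul (D + k)).exp
      have := (hede s).mul h1
      convert this using 1
      case e'_9 => ring
      all_goals rfl
    have hconst := is_const_of_deriv_eq_zero
      (f := fun u => e u * Real.exp ((D + k) * u))
      (fun u => (hg u).differentiableAt) (fun u => (hg u).deriv) t 0
    simp only [mul_zero, Real.exp_zero, mul_one] at hconst
    rw [← hconst, mul_assoc, ← Real.exp_add]
    have h2 : (D + k) * t + -(D + k) * t = 0 := by ring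
    rw [h2, Real.exp_zero, mul_one]
  have hlim : Tendsto (fun t => e 0 * Real.exp (-(D + k) * t)) atTop (nhds 0) := by
    have h : Tendsto (fun t : ℝ => Real.exp (-(D + k) * t)) atTop (nhds 0) := by
      apply Real.tendsto_exp_atBot.comp
      exact Tendsto.const_mul_atTop_of_neg (by linarith) tendsto_id
    simpa using h.const_mul (e 0)
  exact hlim.congr (fun t => (key t).symm)
end

section
/- Under the sufficient excitation assumption ∫₀^{t_c} Δ(τ)² dτ ≥ −(1/γ) ln(1−μ) with μ ∈ (0,1), γ > 0, the FTC estimator θ_FTC(t) := (1/(1 − w_c(t)))·(θ̂(t) − w_c(t) θ̂(0)), where w_c(t) := min(w(t), 1−μ), w' = −γΔ²w, w(0)=1, θ̂' = −γΔ²(θ̂ − θ), satisfies θ_FTC(t) = θ for all t ≥ t_c. -/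
/-- Finite-time convergence of the FTC-DREM estimator: under the sufficient excitation
assumption `∫₀^{t_c} Δ² ≥ −(1/γ) ln(1−μ)`, the clipped estimator
`θ_FTC(t) = (θ̂(t) − w_c(t)θ̂(0))/(1 − w_c(t))`, with `w_c = min(w, 1−μ)`, recovers the
exact parameter: `θ_FTC(t) = θ` for all `t ≥ t_c`. -/
theorem stmt11 (γ : ℝ) (hγ : 0 < γ) (Δ : ℝ → ℝ) (hΔ : Continuous Δ)
    (μ : ℝ) (hμ : μ ∈ Set.Ioo (0:ℝ) 1)
    (θ : ℝ) (θhat : ℝ → ℝ)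
    (hθ : ∀ t, HasDerivAt θhat (-γ * (Δ t) ^ 2 * (θhat t - θ)) t)
    (w : ℝ → ℝ) (hw : ∀ t, HasDerivAt w (-γ * (Δ t) ^ 2 * w t) t) (hw0 : w 0 = 1)
    (tc : ℝ) (htc : 0 < tc)
    (hSE : (∫ τ in (0:ℝ)..tc, (Δ τ) ^ 2) ≥ -(1/γ) * Real.log (1 - μ)) :
    ∀ t, tc ≤ t →
      (1 / (1 - min (w t) (1 - μ))) * (θhat t - min (w t) (1 - μ) * θhat 0) = θ := by
  obtain ⟨hμ0, hμ1⟩ := hμ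
  intro t ht
  have hc : Continuous (fun s => (Δ s)^2) := hΔ.pow 2
  set F : ℝ → ℝ := fun s => ∫ τ in (0:ℝ)..s, (Δ τ)^2 with hFdef
  have hF0 : F 0 = 0 := by simp [hFdef]
  have hFd : ∀ s, HasDerivAt F ((Δ s)^2) s := by
    intro s
    exact intervalIntegral.integral_hasDerivAt_right (hc.intervalIntegrable _ _)
      (hc.stronglyMeasurableAtFilter _ _) hc.continuousAt
  -- ODE uniqueness
  have key : ∀ (f : ℝ → ℝ), (∀ s, HasDerivAt f (-γ * (Δ s)^2 * f s) s) →
      ∀ s, f s = f 0 * Real.exp (-(γ * F s)) := by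
    intro f hf s
    have hg : ∀ u, HasDerivAt (fun u => f u * Real.exp (γ * F u)) 0 u := by
      intro u
      have h1 : HasDerivAt (fun u => γ * F u) (γ * (Δ u)^2) u := (hFd u).const_mul γ
      have h2 : HasDerivAt (fun u => Real.exp (γ * F u))
          (Real.exp (γ * F u) * (γ * (Δ u)^2)) u := h1.exp
      have := (hf u).mul h2
      refine this.congr_deriv ?_
      ring
    have hdiff : Differentiable ℝ (fun u => f u * Real.exp (γ * F u)) :=
      fun u => (hg u).differentiableAt
    have hderiv : ∀ u, deriv (fun u => f u * Real.exp (γ * F u)) u = 0 :=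
      fun u => (hg u).deriv
    have hconst := is_const_of_deriv_eq_zero hdiff hderiv s 0
    simp only [hF0, mul_zero, Real.exp_zero, mul_one] at hconst
    have hexp : Real.exp (γ * F s) ≠ 0 := Real.exp_ne_zero _
    rw [Real.exp_neg]
    field_simp
    linarith [hconst]
  have hwt : w t = Real.exp (-(γ * F t)) := by
    have := key w hw t
    rwa [hw0, one_mul] at this
  have hθt : θhat t - θ = (θhat 0 - θ) * Real.exp (-(γ * F t)) := by
    have hf : ∀ s, HasDerivAt (fun u => θhat u - θ) (-γ * (Δ s)^2 * (θhat s - θ)) s :=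
      fun s => (hθ s).sub_const θ
    exact key _ hf t
  -- F is monotone beyond tc
  have hFtc : F tc ≤ F t := by
    have hadd : (∫ τ in (0:ℝ)..tc, (Δ τ)^2) + (∫ τ in tc..t, (Δ τ)^2)
        = ∫ τ in (0:ℝ)..t, (Δ τ)^2 :=
      intervalIntegral.integral_add_adjacent_intervals
        (hc.intervalIntegrable _ _) (hc.intervalIntegrable _ _)
    have hnn : 0 ≤ ∫ τ in tc..t, (Δ τ)^2 :=
      intervalIntegral.integral_nonneg ht (fun x _ => sq_nonneg _)
    simp only [hFdef]
    linarith
  -- w t ≤ 1 - μ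
  have hwle : w t ≤ 1 - μ := by
    rw [hwt]
    have h1 : -(γ * F t) ≤ Real.log (1 - μ) := by
      have htc' : γ * F tc ≥ -Real.log (1 - μ) := by
        have h3 := mul_le_mul_of_nonneg_left hSE (le_of_lt hγ)
        have h4 : γ * (-(1/γ) * Real.log (1 - μ)) = -Real.log (1 - μ) := by
          field_simp
        simp only [hFdef]
        linarith
      nlinarith [mul_le_mul_of_nonneg_left hFtc (le_of_lt hγ)]
    calc Real.exp (-(γ * F t)) ≤ Real.exp (Real.log (1 - μ)) := Real.exp_le_exp.mpr h1
      _ = 1 - μ := Real.exp_log (by linarith)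
  have hwpos : 0 < w t := by rw [hwt]; exact Real.exp_pos _
  have hmin : min (w t) (1 - μ) = w t := min_eq_left hwle
  rw [hmin]
  have h1w : 1 - w t ≠ 0 := by
    have : w t < 1 := lt_of_le_of_lt hwle (by linarith)
    linarith
  have hnum : θhat t - w t * θhat 0 = θ * (1 - w t) := by
    have : θhat t = θ + (θhat 0 - θ) * w t := by rw [hwt]; linarith [hθt]
    rw [this]; ring
  rw [hnum]
  field_simp
end

section
/- Consider θ̃ : ℝ → ℝⁿ with components θ̃ᵢ' = −γᵢ Δ(t)² θ̃ᵢ, γᵢ > 0, Δ continuous with ∫₀^∞ Δ² = ∞, and suppose Φ : ℝ → Matrix (Fin n) (Fin n) ℝ is bounded, ξ, E : ℝ → ℝⁿ satisfy E = ξ − Φθ and Ê := ξ − Φθ̂ with θ̂ − θ = θ̃. Then Ê(t) − E(t) = −Φ(t)θ̃(t) → 0 as t → ∞, and moreover ‖Ê(t) − E(t)‖ ≤ M e^{−γ_min ∫₀ᵗ Δ²} ‖θ̃(0)‖ where M bounds ‖Φ‖ and γ_min = min γᵢ. -/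
open Filter
open scoped Matrix

/-- Voltage-estimation convergence (Proposition 1): with DREM parameter errors
`θ̃ᵢ' = −γᵢΔ²θ̃ᵢ`, `∫₀^∞ Δ² = ∞`, `Φ` bounded in operator norm by `M`, `E = ξ − Φθ` and
`Ê = ξ − Φθ̂` with `θ̂ − θ = θ̃`, one has `Ê − E = −Φθ̃ → 0`, with the exponential bound
`‖Ê(t) − E(t)‖ ≤ M e^{−γ_min ∫₀ᵗ Δ²} ‖θ̃(0)‖`, where `γ_min = minᵢ γᵢ`. -/
theorem stmt17 {n : ℕ} [NeZero n] (γ : Fin n → ℝ) (hγ : ∀ i, 0 < γ i)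
    (Δ : ℝ → ℝ) (hΔ : Continuous Δ)
    (hL2 : Tendsto (fun t => ∫ τ in (0:ℝ)..t, (Δ τ) ^ 2) atTop atTop)
    (θtil : ℝ → Fin n → ℝ)
    (hθtil : ∀ i t, HasDerivAt (fun s => θtil s i) (-(γ i) * (Δ t) ^ 2 * θtil t i) t)
    (Φ : ℝ → Matrix (Fin n) (Fin n) ℝ)
    (M : ℝ) (hΦbd : ∀ t (v : Fin n → ℝ), ‖(Φ t).mulVec v‖ ≤ M * ‖v‖)
    (E ξ Ehat θhat : ℝ → Fin n → ℝ) (θ : Fin n → ℝ)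
    (hE : ∀ t, E t = ξ t - (Φ t).mulVec θ)
    (hEhat : ∀ t, Ehat t = ξ t - (Φ t).mulVec (θhat t))
    (hdiff : ∀ t, θhat t - θ = θtil t) :
    (∀ t, Ehat t - E t = -(Φ t).mulVec (θtil t)) ∧
    Tendsto (fun t => Ehat t - E t) atTop (nhds 0) ∧
    (∀ t, 0 ≤ t → ‖Ehat t - E t‖ ≤
      M * Real.exp (-(Finset.univ.inf' Finset.univ_nonempty γ) *
        ∫ τ in (0:ℝ)..t, (Δ τ) ^ 2) * ‖θtil 0‖) := by
  set γm := Finset.univ.inf' Finset.univ_nonempty γ with hγm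
  set F : ℝ → ℝ := fun t => ∫ τ in (0:ℝ)..t, (Δ τ) ^ 2 with hFdef
  have hFderiv : ∀ t, HasDerivAt F ((Δ t) ^ 2) t := fun t =>
    ((hΔ.pow 2).integral_hasStrictDerivAt 0 t).hasDerivAt
  have hF0 : F 0 = 0 := by simp [hFdef]
  -- explicit solution of each scalar ODE
  have hsol : ∀ i t, θtil t i = θtil 0 i * Real.exp (-(γ i) * F t) := by
    intro i t
    set g : ℝ → ℝ := fun s => θtil s i * Real.exp (γ i * F s) with hg
    have hgderiv : ∀ s, HasDerivAt g 0 s := by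
      intro s
      have h1 := (hθtil i s).mul (((hFderiv s).const_mul (γ i)).exp)
      exact h1.congr_deriv (by ring)
    have hconst : g t = g 0 :=
      is_const_of_deriv_eq_zero (fun s => (hgderiv s).differentiableAt)
        (fun s => (hgderiv s).deriv) t 0
    have h0 : g 0 = θtil 0 i := by simp [hg, hF0]
    have : θtil t i * Real.exp (γ i * F t) = θtil 0 i := by rw [← h0]; exact hconst
    have hexp : Real.exp (γ i * F t) ≠ 0 := Real.exp_ne_zero _
    rw [neg_mul, Real.exp_neg, ← this, mul_inv_cancel_right₀ hexp]
  have hγm_le : ∀ i, γm ≤ γ i := fun i => Finset.inf'_le _ (Finset.mem_univ i)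
  have hγm_pos : 0 < γm := by
    obtain ⟨i, _, hi⟩ := Finset.exists_mem_eq_inf' Finset.univ_nonempty γ
    rw [hγm, hi]; exact hγ i
  -- bound on ‖θtil t‖ for t ≥ 0
  have hθbd : ∀ t, 0 ≤ t → ‖θtil t‖ ≤ Real.exp (-γm * F t) * ‖θtil 0‖ := by
    intro t ht
    have hFnn : 0 ≤ F t := intervalIntegral.integral_nonneg ht (fun τ _ => sq_nonneg _)
    have hexpnn : 0 ≤ Real.exp (-γm * F t) * ‖θtil 0‖ :=
      mul_nonneg (Real.exp_pos _).le (norm_nonneg _)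
    rw [pi_norm_le_iff_of_nonneg hexpnn]
    intro i
    rw [Real.norm_eq_abs, hsol i t, abs_mul, Real.abs_exp]
    have h1 : Real.exp (-(γ i) * F t) ≤ Real.exp (-γm * F t) :=
      Real.exp_le_exp.mpr (by nlinarith [hγm_le i])
    have h2 : |θtil 0 i| ≤ ‖θtil 0‖ := by
      rw [← Real.norm_eq_abs]; exact norm_le_pi_norm (θtil 0) i
    calc |θtil 0 i| * Real.exp (-(γ i) * F t)
        ≤ ‖θtil 0‖ * Real.exp (-γm * F t) :=
          mul_le_mul h2 h1 (Real.exp_pos _).le (norm_nonneg _)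
      _ = Real.exp (-γm * F t) * ‖θtil 0‖ := mul_comm _ _
  have hM : 0 ≤ M := by
    have := hΦbd 0 (fun _ => 1)
    have hn : ‖(fun _ : Fin n => (1:ℝ))‖ = 1 := by
      rw [pi_norm_const]; simp
    rw [hn, mul_one] at this
    exact le_trans (norm_nonneg _) this
  have key : ∀ t, Ehat t - E t = -(Φ t).mulVec (θtil t) := by
    intro t
    rw [hEhat, hE, ← hdiff t, Matrix.mulVec_sub]
    abel
  refine ⟨key, ?_, ?_⟩
  · rw [tendsto_zero_iff_norm_tendsto_zero]
    have hbnd : ∀ᶠ t in atTop, ‖Ehat t - E t‖ ≤ M * ‖θtil 0‖ * Real.exp (-γm * F t) := by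
      filter_upwards [eventually_ge_atTop (0:ℝ)] with t ht
      rw [key t, norm_neg]
      calc ‖(Φ t).mulVec (θtil t)‖ ≤ M * ‖θtil t‖ := hΦbd t _
        _ ≤ M * (Real.exp (-γm * F t) * ‖θtil 0‖) :=
            mul_le_mul_of_nonneg_left (hθbd t ht) hM
        _ = M * ‖θtil 0‖ * Real.exp (-γm * F t) := by ring
    have hlim : Tendsto (fun t => M * ‖θtil 0‖ * Real.exp (-γm * F t)) atTop (nhds 0) := by
      have h := (Real.tendsto_exp_atBot.comp
        (Tendsto.const_mul_atTop_of_neg (neg_neg_iff_pos.mpr hγm_pos) hL2)).const_mul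
        (M * ‖θtil 0‖)
      simpa [Function.comp] using h
    exact squeeze_zero' (Eventually.of_forall fun t => norm_nonneg _) hbnd hlim
  · intro t ht
    rw [key t, norm_neg]
    calc ‖(Φ t).mulVec (θtil t)‖ ≤ M * ‖θtil t‖ := hΦbd t _
      _ ≤ M * (Real.exp (-γm * F t) * ‖θtil 0‖) :=
          mul_le_mul_of_nonneg_left (hθbd t ht) hM
      _ = M * Real.exp (-γm * F t) * ‖θtil 0‖ := by ring
end
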